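/- Let H and H' be crossed homomorphisms from g to h with respect to ρ, and let (φ_g, φ_h) be a homomorphism from H' to H with φ_g invertible, i.e. φ_g, φ_h are Lie algebra endomorphisms satisfying H ∘ φ_g = φ_h ∘ H' and φ_h(ρ(x)u) = ρ(φ_g(x))(φ_h(u)). Then the map Φ : Hom(Λ^k g, h) → Hom(Λ^k g, h), f ↦ φ_h ∘ f ∘ (φ_g^{-1})^{⊗k}, is a cochain map from the complex (C*(g,h), d_{ρ_{H'}}) to (C*(g,h), d_{ρ_H}). -/
import Mathlib


section

variable {K g h : Type*} [Field K] [CharZero K]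
  [LieRing g] [LieAlgebra K g] [LieRing h] [LieAlgebra K h]

/-- The Chevalley–Eilenberg coboundary operator of the representation
`ρ_H x u = ρ x u + ⁅H x, u⁆` on `h`, for a crossed homomorphism `H` (the value on
`(x₁, …, x_{k+1})`, written using that `f` is alternating). -/
noncomputable def gDH (ρ : g →ₗ[K] Module.End K h) (H : g →ₗ[K] h) {k : ℕ}
    (f : (Fin k → g) → h) : (Fin (k + 1) → g) → h :=
  fun x =>
    (∑ i : Fin (k + 1), ((-1 : ℤ) ^ (i : ℕ)) •
      (ρ (x i) (f (i.removeNth x)) + ⁅H (x i), f (i.removeNth x)⁆)) +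
    ∑ j : Fin (k + 1), ∑ i : Fin (j : ℕ),
      ((-1 : ℤ) ^ (j : ℕ)) •
        f (Function.update (j.removeNth x)
            ⟨(i : ℕ), by have := i.isLt; have := j.isLt; omega⟩
            ⁅x ⟨(i : ℕ), by have := i.isLt; have := j.isLt; omega⟩, x j⁆)

/-- let `H`, `H'` be crossed homomorphisms from `g` to `h` with respect
to `ρ` and `(φ_g, φ_h)` a homomorphism from `H'` to `H` with `φ_g` invertible. Then
`Φ : f ↦ φ_h ∘ f ∘ (φ_g⁻¹)^{⊗k}` is a cochain map from `(C*(g,h), d_{ρ_{H'}})` to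
`(C*(g,h), d_{ρ_H})`. -/
theorem conjugation_cochain_map
    (ρ : g →ₗ[K] Module.End K h)
    (hder : ∀ (x : g) (u v : h), ρ x ⁅u, v⁆ = ⁅ρ x u, v⁆ + ⁅u, ρ x v⁆)
    (hhom : ∀ (x y : g) (u : h), ρ ⁅x, y⁆ u = ρ x (ρ y u) - ρ y (ρ x u))
    (H H' : g →ₗ[K] h)
    (hH : ∀ x y : g, H ⁅x, y⁆ = ρ x (H y) - ρ y (H x) + ⁅H x, H y⁆)
    (hH' : ∀ x y : g, H' ⁅x, y⁆ = ρ x (H' y) - ρ y (H' x) + ⁅H' x, H' y⁆)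
    (φg : g ≃ₗ⁅K⁆ g) (φh : h →ₗ⁅K⁆ h)
    (hcomm : ∀ x : g, H (φg x) = φh (H' x))
    (hcompat : ∀ (x : g) (u : h), φh (ρ x u) = ρ (φg x) (φh u)) :
    ∀ (k : ℕ) (f : (Fin k → g) → h),
      (fun x : Fin (k + 1) → g =>
        φh (gDH ρ H' f fun i => φg.symm (x i))) =
      gDH ρ H (fun x : Fin k → g => φh (f fun i => φg.symm (x i))) := by
  intro k f
  funext x
  simp only [gDH]
  rw [← LieHom.coe_toLinearMap φh]
  simp only [map_add, map_sum, map_zsmul]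
  simp only [LieHom.coe_toLinearMap]
  refine congrArg₂ (· + ·) (Finset.sum_congr rfl fun i _ => ?_)
    (Finset.sum_congr rfl fun j _ => Finset.sum_congr rfl fun i _ => ?_)
  · rw [hcompat, LieEquiv.apply_symm_apply, φh.map_lie, ← hcomm,
      LieEquiv.apply_symm_apply]
    rfl
  · congr 2
    refine congrArg f ?_
    have : (fun i' => φg.symm ((Function.update (j.removeNth x)
        ⟨(i : ℕ), by have := i.isLt; have := j.isLt; omega⟩
        ⁅x ⟨(i : ℕ), by have := i.isLt; have := j.isLt; omega⟩, x j⁆) i'))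
        = Function.update (fun i' => φg.symm (j.removeNth x i'))
          ⟨(i : ℕ), by have := i.isLt; have := j.isLt; omega⟩
          (φg.symm ⁅x ⟨(i : ℕ), by have := i.isLt; have := j.isLt; omega⟩, x j⁆) := by
      exact Function.comp_update (f := φg.symm) _ _ _
    rw [this, LieEquiv.map_lie]
    rfl

end
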